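/- Let L be a finite semimodular lattice and let C be a maximal chain of L. Then every join-irreducible congruence of L equals con(a, b) for some covering pair a ≺ b with a, b ∈ C. Consequently, the number of join-irreducible congruences of L is at most the length of L. -/

import Mathlib

/-- A lattice congruence: an equivalence relation compatible with `⊔` and `⊓`. -/
def IsLatCon {L : Type*} [Lattice L] (r : L → L → Prop) : Prop :=
  Equivalence r ∧
    (∀ a b c d : L, r a b → r c d → r (a ⊔ c) (b ⊔ d)) ∧
    (∀ a b c d : L, r a b → r c d → r (a ⊓ c) (b ⊓ d))

/-- The congruences of a lattice, ordered by inclusion. -/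
def LatCon (L : Type*) [Lattice L] := {r : L → L → Prop // IsLatCon r}

instance {L : Type*} [Lattice L] : PartialOrder (LatCon L) :=
  Subtype.partialOrder _

namespace AuxJICong

variable {L : Type*} [Lattice L]

instance [Finite L] : Finite (LatCon L) := by
  unfold LatCon; infer_instance

lemma convex_join {θ : LatCon L} {x y : L} (z : L) (h : θ.1 x y) : θ.1 (x ⊔ z) (y ⊔ z) :=
  θ.2.2.1 x y z z h (θ.2.1.refl z)

lemma convex_meet {θ : LatCon L} {x y : L} (z : L) (h : θ.1 x y) : θ.1 (x ⊓ z) (y ⊓ z) :=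
  θ.2.2.2 x y z z h (θ.2.1.refl z)

lemma le_def {θ ψ : LatCon L} (h : ∀ x y, θ.1 x y → ψ.1 x y) : θ ≤ ψ := by
  intro x y hxy; exact h x y hxy

/-- A maximal chain (as a finset) contains a bottom and a top of the lattice. -/
lemma chain_bot_top (C : Finset L) (hC : IsMaxChain (· ≤ ·) (↑C : Set L))
    (hne : Nonempty L) :
    ∃ m ∈ C, ∃ M ∈ C, (∀ x : L, m ≤ x) ∧ (∀ x : L, x ≤ M) := by
  obtain ⟨x0⟩ := hne
  have hCne : C.Nonempty := by
    by_contra h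
    have hsing : IsChain (· ≤ ·) ({x0} : Set L) := by
      intro a ha b hb hab
      rw [Set.mem_singleton_iff] at ha hb
      exact absurd (ha.trans hb.symm) hab
    have hCe : (↑C : Set L) = {x0} := hC.2 hsing
      (by simp [Finset.not_nonempty_iff_eq_empty.mp h])
    have : x0 ∈ (↑C : Set L) := hCe ▸ rfl
    exact h ⟨x0, this⟩
  obtain ⟨m, hmC, hmmin⟩ := C.exists_minimal hCne
  obtain ⟨M, hMC, hMmax⟩ := C.exists_maximal hCne
  have hmle : ∀ c ∈ C, m ≤ c := by
    intro c hc
    rcases eq_or_ne c m with rfl | hne'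
    · exact le_rfl
    · rcases hC.1 hc hmC hne' with h | h
      · exact absurd (lt_of_le_of_ne h hne') (fun hlt => hlt.not_ge (hmmin hc hlt.le))
      · exact h
  have hMle : ∀ c ∈ C, c ≤ M := by
    intro c hc
    rcases eq_or_ne c M with rfl | hne'
    · exact le_rfl
    · rcases hC.1 hc hMC hne' with h | h
      · exact h
      · exact absurd (lt_of_le_of_ne h (Ne.symm hne')) (fun hlt => hlt.not_ge (hMmax hc hlt.le))
  refine ⟨m, hmC, M, hMC, ?_, ?_⟩
  · intro x
    have hchain : IsChain (· ≤ ·) (insert (m ⊓ x) (↑C : Set L)) := by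
      refine hC.1.insert ?_
      intro c hc _
      exact Or.inl (inf_le_left.trans (hmle c hc))
    have := hC.2 hchain (Set.subset_insert _ _)
    have hmem : m ⊓ x ∈ (↑C : Set L) := by rw [this]; exact Set.mem_insert _ _
    have := hmle _ hmem
    exact this.trans inf_le_right
  · intro x
    have hchain : IsChain (· ≤ ·) (insert (M ⊔ x) (↑C : Set L)) := by
      refine hC.1.insert ?_
      intro c hc _
      exact Or.inr ((hMle c hc).trans le_sup_left)
    have := hC.2 hchain (Set.subset_insert _ _)
    have hmem : M ⊔ x ∈ (↑C : Set L) := by rw [this]; exact Set.mem_insert _ _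
    have := hMle _ hmem
    exact le_sup_right.trans this

/-- Key lemma: in a semimodular lattice, every prime interval is congruence-perspective
to a prime interval of any maximal chain. -/
lemma key [Fintype L] (hsm : ∀ x y : L, x ⊓ y ⋖ x → y ⋖ x ⊔ y)
    (C : Finset L) (hC : IsMaxChain (· ≤ ·) (↑C : Set L))
    {p q : L} (hpq : p ⋖ q) :
    ∃ a ∈ C, ∃ b ∈ C, a ⋖ b ∧ ∀ φ : LatCon L, (φ.1 p q ↔ φ.1 a b) := by
  classical
  obtain ⟨m, hmC, M, hMC, hmbot, hMtop⟩ := chain_bot_top C hC ⟨p⟩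
  set S : Finset L := C.filter (fun c => q ≤ p ⊔ c) with hS
  have hMS : M ∈ S := Finset.mem_filter.mpr ⟨hMC, (hMtop q).trans le_sup_right⟩
  obtain ⟨b, hbS, hbmin⟩ := S.exists_minimal ⟨M, hMS⟩
  have hbC : b ∈ C := (Finset.mem_filter.mp hbS).1
  have hqb : q ≤ p ⊔ b := (Finset.mem_filter.mp hbS).2
  have hble : ∀ c ∈ S, b ≤ c := by
    intro c hc
    rcases eq_or_ne c b with rfl | hne'
    · exact le_rfl
    · rcases hC.1 (Finset.mem_filter.mp hc).1 hbC hne' with h | h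
      · exact absurd (lt_of_le_of_ne h hne') (fun hlt => hlt.not_ge (hbmin hc hlt.le))
      · exact h
  have hmS : m ∉ S := by
    intro h
    have : q ≤ p := by
      have := (Finset.mem_filter.mp h).2
      rwa [sup_eq_left.mpr (hmbot p)] at this
    exact absurd this (not_le_of_gt hpq.1)
  set T : Finset L := C.filter (fun c => c < b) with hT
  have hmT : m ∈ T := Finset.mem_filter.mpr ⟨hmC,
    lt_of_le_of_ne (hmbot b) (fun h => hmS (h ▸ hbS))⟩
  obtain ⟨a, haT, hamax⟩ := T.exists_maximal ⟨m, hmT⟩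
  have haC : a ∈ C := (Finset.mem_filter.mp haT).1
  have hab : a < b := (Finset.mem_filter.mp haT).2
  have hale : ∀ c ∈ T, c ≤ a := by
    intro c hc
    rcases eq_or_ne c a with rfl | hne'
    · exact le_rfl
    · rcases hC.1 (Finset.mem_filter.mp hc).1 haC hne' with h | h
      · exact h
      · exact absurd (lt_of_le_of_ne h (Ne.symm hne')) (fun hlt => hlt.not_ge (hamax hc hlt.le))
  have hqa : ¬ q ≤ p ⊔ a := by
    intro h
    have : a ∈ S := Finset.mem_filter.mpr ⟨haC, h⟩
    exact absurd hab (not_lt_of_ge (hble a this))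
  -- a ⋖ b in L
  have hcov : a ⋖ b := by
    refine ⟨hab, fun z haz hzb => ?_⟩
    have hchain : IsChain (· ≤ ·) (insert z (↑C : Set L)) := by
      refine hC.1.insert ?_
      intro c hc _
      rcases eq_or_ne c b with rfl | hne'
      · exact Or.inl hzb.le
      · rcases hC.1 hc hbC hne' with h | h
        · exact Or.inr ((hale c (Finset.mem_filter.mpr ⟨hc, lt_of_le_of_ne h hne'⟩)).trans
            haz.le)
        · exact Or.inl (hzb.le.trans h)
    have := hC.2 hchain (Set.subset_insert _ _)
    have hzC : z ∈ C := by
      have : z ∈ (↑C : Set L) := by rw [this]; exact Set.mem_insert _ _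
      exact_mod_cast this
    exact absurd (hale z (Finset.mem_filter.mpr ⟨hzC, hzb⟩)) (not_le_of_gt haz)
  set d := p ⊔ a with hd
  set e := q ⊔ a with he
  have hpd : p ≤ d := le_sup_left
  have h_qd : ¬ q ≤ d := hqa
  have h_qdp : q ⊓ d = p := by
    have hle : p ≤ q ⊓ d := le_inf hpq.1.le hpd
    rcases eq_or_lt_of_le hle with h | h
    · exact h.symm
    · exfalso
      have hlt : q ⊓ d < q := lt_of_le_of_ne inf_le_left (fun h' => h_qd (inf_eq_left.mp h'))
      exact hpq.2 h hlt
  have hde : d ⋖ e := by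
    have h1 : q ⊓ d ⋖ q := by rw [h_qdp]; exact hpq
    have h2 := hsm q d h1
    have h3 : q ⊔ d = e := by
      rw [hd, he, ← sup_assoc, sup_eq_left.mpr hpq.1.le]
    rwa [h3] at h2
  have h_bd : ¬ b ≤ d := by
    intro h
    exact h_qd (hqb.trans (sup_le hpd h))
  have h_db : d ⊓ b = a := by
    have hle : a ≤ d ⊓ b := le_inf le_sup_right hab.le
    rcases eq_or_lt_of_le hle with h | h
    · exact h.symm
    · exfalso
      have hlt : d ⊓ b < b := lt_of_le_of_ne inf_le_right (fun h' => h_bd (inf_eq_right.mp h'))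
      exact hcov.2 h hlt
  have h_cov2 : d ⋖ b ⊔ d := by
    have h1 : b ⊓ d ⋖ b := by rw [inf_comm, h_db]; exact hcov
    exact hsm b d h1
  have had : a ≤ d := by rw [hd]; exact le_sup_right
  have h_ebd : e = b ⊔ d := by
    have h1 : e ≤ b ⊔ d := by
      rw [he]
      exact sup_le (hqb.trans (sup_le (hpd.trans le_sup_right) le_sup_left))
        (had.trans le_sup_right)
    rcases eq_or_lt_of_le h1 with h | h
    · exact h
    · exact (h_cov2.2 hde.1 h).elim
  have hbe : b ≤ e := h_ebd ▸ le_sup_left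
  have h_pb : p ⊔ b = e := by
    apply le_antisymm
    · rw [h_ebd]; exact sup_le (hpd.trans le_sup_right) le_sup_left
    · rw [he]; exact sup_le hqb (hab.le.trans le_sup_right)
  refine ⟨a, haC, b, hbC, hcov, fun φ => ⟨fun h => ?_, fun h => ?_⟩⟩
  · have h1 : φ.1 d e := by rw [hd, he]; exact φ.2.2.1 p q a a h (φ.2.1.refl a)
    have h2 := convex_meet b h1
    rwa [h_db, inf_eq_right.mpr hbe] at h2
  · have h1 : φ.1 d e := by
      have := φ.2.2.1 p p a b (φ.2.1.refl p) h
      rwa [← hd, h_pb] at this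
    have h2 := convex_meet q h1
    have hqe : q ≤ e := by rw [he]; exact le_sup_left
    rwa [inf_comm d q, h_qdp, inf_eq_right.mpr hqe] at h2

/-- Below a join-irreducible congruence with unique lower cover, everything strictly
below lies below the unique cover. -/
lemma le_uniqueCover [Fintype L] {t p0 a : LatCon L} (hu : p0 ⋖ t)
    (huniq : ∀ y : LatCon L, y ⋖ t → y = p0) (h : a < t) : a ≤ p0 := by
  set G : Set (LatCon L) := {g | a ≤ g ∧ g < t} with hG
  have hGfin : G.Finite := Set.toFinite G
  obtain ⟨g, hg, hmax⟩ := hGfin.exists_maximal ⟨a, le_refl a, h⟩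
  have hcov : g ⋖ t := by
    refine ⟨hg.2, fun z h1 h2 => ?_⟩
    have hz : z ∈ G := ⟨hg.1.trans h1.le, h2⟩
    exact h1.not_ge (hmax hz h1.le)
  have := huniq g hcov
  exact this ▸ hg.1

lemma exists_prime_pair [Fintype L] {t p0 : LatCon L} :
    ∀ n : ℕ, ∀ u v : L, (Set.Icc u v).ncard ≤ n → u < v → t.1 u v → ¬ p0.1 u v →
    ∃ p q : L, p ⋖ q ∧ t.1 p q ∧ ¬ p0.1 p q := by
  intro n
  induction n with
  | zero =>
    intro u v hc huv _ _
    exfalso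
    have : 0 < (Set.Icc u v).ncard :=
      (Set.ncard_pos (Set.toFinite _)).mpr ⟨u, Set.mem_Icc.mpr ⟨le_rfl, huv.le⟩⟩
    omega
  | succ n ih =>
    intro u v hc huv ht hp
    by_cases hcov : u ⋖ v
    · exact ⟨u, v, hcov, ht, hp⟩
    · obtain ⟨z, h1, h2⟩ := (not_covBy_iff huv).mp hcov
      have ht1 : t.1 u z := by
        have := convex_meet z ht
        rwa [inf_eq_left.mpr h1.le, inf_eq_right.mpr h2.le] at this
      have ht2 : t.1 z v := by
        have := convex_join z ht
        rwa [sup_eq_right.mpr h1.le, sup_eq_left.mpr h2.le] at this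
      have hsub1 : (Set.Icc u z).ncard < (Set.Icc u v).ncard := by
        apply Set.ncard_lt_ncard _ (Set.toFinite _)
        refine ⟨Set.Icc_subset_Icc_right h2.le, fun hsub => ?_⟩
        have : v ∈ Set.Icc u z := hsub (Set.mem_Icc.mpr ⟨huv.le, le_rfl⟩)
        exact absurd (Set.mem_Icc.mp this).2 (not_le_of_gt h2)
      have hsub2 : (Set.Icc z v).ncard < (Set.Icc u v).ncard := by
        apply Set.ncard_lt_ncard _ (Set.toFinite _)
        refine ⟨Set.Icc_subset_Icc_left h1.le, fun hsub => ?_⟩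
        have : u ∈ Set.Icc z v := hsub (Set.mem_Icc.mpr ⟨le_rfl, huv.le⟩)
        exact absurd (Set.mem_Icc.mp this).1 (not_le_of_gt h1)
      by_cases hpz : p0.1 u z
      · have hp2 : ¬ p0.1 z v := fun h => hp (p0.2.1.trans hpz h)
        exact ih z v (by omega) h2 ht2 hp2
      · exact ih u z (by omega) h1 ht1 hpz

end AuxJICong

theorem joinIrreducible_congruences_on_maximal_chain {L : Type*} [Lattice L] [Fintype L]
    (hsm : ∀ x y : L, x ⊓ y ⋖ x → y ⋖ x ⊔ y)
    (C : Finset L) (hC : IsMaxChain (· ≤ ·) (↑C : Set L)) (k : ℕ)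
    (hlen : ∀ D : Finset L, IsChain (· ≤ ·) (↑D : Set L) → D.card ≤ k + 1)
    (hlen' : ∃ D : Finset L, IsChain (· ≤ ·) (↑D : Set L) ∧ D.card = k + 1) :
    (∀ θ : LatCon L, (∃! ψ : LatCon L, ψ ⋖ θ) →
      ∃ a ∈ C, ∃ b ∈ C, a ⋖ b ∧ θ.1 a b ∧ ∀ ψ : LatCon L, ψ.1 a b → θ ≤ ψ) ∧
    Nat.card {θ : LatCon L // ∃! ψ : LatCon L, ψ ⋖ θ} ≤ k := by
  classical
  open AuxJICong in
  obtain ⟨D, hDc, hDcard⟩ := hlen'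
  have hne : Nonempty L := by
    obtain ⟨x, hx⟩ := Finset.card_pos.mp (by omega : 0 < D.card)
    exact ⟨x⟩
  have H1 : ∀ θ : LatCon L, (∃! ψ : LatCon L, ψ ⋖ θ) →
      ∃ a ∈ C, ∃ b ∈ C, a ⋖ b ∧ θ.1 a b ∧ ∀ ψ : LatCon L, ψ.1 a b → θ ≤ ψ := by
    intro θ hex
    obtain ⟨ψ₀, hψ₀, huniq⟩ := hex
    have hlt : ψ₀ < θ := hψ₀.1
    have hxy : ∃ x y, θ.1 x y ∧ ¬ ψ₀.1 x y := by
      by_contra h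
      push_neg at h
      exact absurd (AuxJICong.le_def h) (not_le_of_gt hlt)
    obtain ⟨x, y, hθxy, hψxy⟩ := hxy
    set u := x ⊓ y with hu
    set v := x ⊔ y with hv
    have hθuy : θ.1 u y := by
      have := AuxJICong.convex_meet y hθxy
      rwa [← hu, inf_idem] at this
    have hθvy : θ.1 v y := by
      have := AuxJICong.convex_join y hθxy
      rwa [← hv, sup_idem] at this
    have hθuv : θ.1 u v := θ.2.1.trans hθuy (θ.2.1.symm hθvy)
    have hψuv : ¬ ψ₀.1 u v := by
      intro h
      apply hψxy
      have hx1 : ψ₀.1 x v := by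
        have := AuxJICong.convex_join x h
        rwa [sup_eq_right.mpr (inf_le_left : u ≤ x),
          sup_eq_left.mpr (le_sup_left : x ≤ v)] at this
      have hy1 : ψ₀.1 y v := by
        have := AuxJICong.convex_join y h
        rwa [sup_eq_right.mpr (inf_le_right : u ≤ y),
          sup_eq_left.mpr (le_sup_right : y ≤ v)] at this
      exact ψ₀.2.1.trans hx1 (ψ₀.2.1.symm hy1)
    have huv : u < v := by
      rcases eq_or_lt_of_le (inf_le_left.trans le_sup_left : u ≤ v) with h | h
      · exact absurd (h ▸ ψ₀.2.1.refl u) hψuv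
      · exact h
    obtain ⟨p, q, hpq, hθpq, hψpq⟩ :=
      AuxJICong.exists_prime_pair (Set.Icc u v).ncard u v le_rfl huv hθuv hψuv
    obtain ⟨a, haC, b, hbC, hab, hiff⟩ := AuxJICong.key hsm C hC hpq
    refine ⟨a, haC, b, hbC, hab, (hiff θ).mp hθpq, ?_⟩
    intro ψ hψab
    have hγc : IsLatCon (fun x y => ψ.1 x y ∧ θ.1 x y) := by
      refine ⟨⟨fun z => ⟨ψ.2.1.refl z, θ.2.1.refl z⟩,
        fun h => ⟨ψ.2.1.symm h.1, θ.2.1.symm h.2⟩,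
        fun h h' => ⟨ψ.2.1.trans h.1 h'.1, θ.2.1.trans h.2 h'.2⟩⟩, ?_, ?_⟩
      · exact fun a b c d h h' => ⟨ψ.2.2.1 a b c d h.1 h'.1, θ.2.2.1 a b c d h.2 h'.2⟩
      · exact fun a b c d h h' => ⟨ψ.2.2.2 a b c d h.1 h'.1, θ.2.2.2 a b c d h.2 h'.2⟩
    set γ : LatCon L := ⟨fun x y => ψ.1 x y ∧ θ.1 x y, hγc⟩ with hγ
    have hγθ : γ ≤ θ := AuxJICong.le_def (fun x y h => h.2)
    have hγpq : γ.1 p q := ⟨(hiff ψ).mpr hψab, hθpq⟩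
    have hγeq : γ = θ := by
      rcases eq_or_lt_of_le hγθ with h | h
      · exact h
      · exact absurd ((AuxJICong.le_uniqueCover hψ₀ huniq h) p q hγpq) hψpq
    have hθγ : θ ≤ γ := le_of_eq hγeq.symm
    exact hθγ.trans (AuxJICong.le_def (fun x y h => h.1))
  refine ⟨H1, ?_⟩
  obtain ⟨m, hmC, M, hMC, hmbot, hMtop⟩ := AuxJICong.chain_bot_top C hC hne
  have hspec : ∀ θ : {θ : LatCon L // ∃! ψ : LatCon L, ψ ⋖ θ},
      ∃ a, a ∈ C.erase M ∧ ∃ b ∈ C, a ⋖ b ∧ θ.1.1 a b ∧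
        ∀ ψ : LatCon L, ψ.1 a b → θ.1 ≤ ψ := by
    intro θ
    obtain ⟨a, haC, b, hbC, hab, h1, h2⟩ := H1 θ.1 θ.2
    refine ⟨a, Finset.mem_erase.mpr ⟨?_, haC⟩, b, hbC, hab, h1, h2⟩
    exact ne_of_lt (lt_of_lt_of_le hab.1 (hMtop b))
  set f : {θ : LatCon L // ∃! ψ : LatCon L, ψ ⋖ θ} → {x // x ∈ C.erase M} :=
    fun θ => ⟨(hspec θ).choose, (hspec θ).choose_spec.1⟩ with hf
  have hinj : Function.Injective f := by
    intro θ₁ θ₂ hfeq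
    obtain ⟨b₁, hb₁C, hab₁, hθ₁, hmin₁⟩ := (hspec θ₁).choose_spec.2
    obtain ⟨b₂, hb₂C, hab₂, hθ₂, hmin₂⟩ := (hspec θ₂).choose_spec.2
    have ha : (hspec θ₁).choose = (hspec θ₂).choose := congrArg Subtype.val hfeq
    rw [ha] at hab₁ hθ₁ hmin₁
    have hb : b₁ = b₂ := by
      rcases eq_or_ne b₁ b₂ with h | h
      · exact h
      · rcases hC.1 hb₁C hb₂C h with hle | hle
        · exact absurd (lt_of_le_of_ne hle h) (fun hlt => hab₂.2 hab₁.1 hlt)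
        · exact absurd (lt_of_le_of_ne hle (Ne.symm h)) (fun hlt => hab₁.2 hab₂.1 hlt)
    rw [hb] at hθ₁ hmin₁
    exact Subtype.ext (le_antisymm (hmin₁ θ₂.1 hθ₂) (hmin₂ θ₁.1 hθ₁))
  have hcard := Nat.card_le_card_of_injective f hinj
  have h1 : Nat.card {x // x ∈ C.erase M} = (C.erase M).card := by
    rw [Nat.card_eq_fintype_card]
    exact Fintype.card_coe (C.erase M)
  have h2 : (C.erase M).card = C.card - 1 := Finset.card_erase_of_mem hMC
  have h3 : C.card ≤ k + 1 := hlen C hC.1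
  omega
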